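/- Let k, ℓ, m, n be positive integers with ℓ > k ≥ 2, n > ℓ + 1, m > k + 1, and F^(k)_m = F^(ℓ)_n. Assume moreover that n < 2^{ℓ/2} and m < 2^{k/2}. Then |2^{n−m} − 1| < 11/2^{k/2}. -/
import Mathlib


/-- `gfib k i` is the `k`-generalized Fibonacci number `F^(k)_n` with the shifted index
`i = n + k - 2`: it is `0` for `i < k - 1` (i.e. `n ≤ 0`), `1` for `i = k - 1`
(i.e. `F^(k)_1 = 1`), and for `i ≥ k` (i.e. `n ≥ 2`) it is the sum of the `k`
preceding terms. -/
def gfib (k : ℕ) (i : ℕ) : ℕ :=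
  if _h1 : i < k - 1 then 0
  else if _h2 : i = k - 1 then 1
  else ∑ j ∈ Finset.range k, gfib k (i - 1 - j)
termination_by i
decreasing_by
  simp_wf
  omega

/-- `genFib k n = F^(k)_n`, the `n`-th `k`-generalized Fibonacci number (for `n ≥ 0`). -/
def genFib (k : ℕ) (n : ℕ) : ℕ := gfib k (n + k - 2)

lemma gfib_zero {k i : ℕ} (h : i < k - 1) : gfib k i = 0 := by
  rw [gfib]; simp [h]

lemma gfib_km1 (k : ℕ) : gfib k (k - 1) = 1 := by
  rw [gfib]; simp

lemma gfib_rec {k i : ℕ} (hk : 2 ≤ k) (hi : k ≤ i) :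
    gfib k i = ∑ j ∈ Finset.range k, gfib k (i - 1 - j) := by
  rw [gfib]; rw [dif_neg (by omega), dif_neg (by omega)]

lemma gfib_k {k : ℕ} (hk : 2 ≤ k) : gfib k k = 1 := by
  rw [gfib_rec hk le_rfl]
  rw [Finset.sum_eq_single_of_mem 0 (by simp; omega)]
  · simp [gfib_km1]
  · intro j hj hj0
    exact gfib_zero (by simp at hj; omega)

lemma gfib_two_rec {k i : ℕ} (hk : 2 ≤ k) (hi : k + 1 ≤ i) :
    gfib k i + gfib k (i - k - 1) = 2 * gfib k (i - 1) := by
  have h1 : gfib k i = ∑ j ∈ Finset.range k, gfib k (i - 1 - j) := gfib_rec hk (by omega)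
  have h2 : gfib k (i - 1) = ∑ j ∈ Finset.range k, gfib k (i - 1 - 1 - j) :=
    gfib_rec hk (by omega)
  obtain ⟨k', rfl⟩ : ∃ k', k = k' + 1 := ⟨k - 1, by omega⟩
  rw [Finset.sum_range_succ'] at h1
  rw [Finset.sum_range_succ] at h2
  have e1 : ∑ j ∈ Finset.range k', gfib (k' + 1) (i - 1 - (j + 1))
      = ∑ j ∈ Finset.range k', gfib (k' + 1) (i - 1 - 1 - j) :=
    Finset.sum_congr rfl (fun j _ => by congr 1; omega)
  rw [e1] at h1
  have e2 : i - 1 - 0 = i - 1 := by omega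
  rw [e2] at h1
  have e3 : i - 1 - 1 - k' = i - (k' + 1) - 1 := by omega
  rw [e3] at h2
  omega

lemma gfib_le {k : ℕ} (hk : 2 ≤ k) : ∀ t, gfib k (k + t) ≤ 2 ^ t := by
  intro t
  induction t with
  | zero => simp [gfib_k hk]
  | succ t ih =>
    have h := gfib_two_rec hk (i := k + t + 1) (by omega)
    have e : k + t + 1 - 1 = k + t := by omega
    rw [e] at h
    have e2 : k + t + 1 - k - 1 = t := by omega
    rw [e2] at h
    have e3 : k + (t + 1) = k + t + 1 := by omega
    rw [e3]
    calc gfib k (k + t + 1) ≤ 2 * gfib k (k + t) := by omega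
      _ ≤ 2 * 2 ^ t := by omega
      _ = 2 ^ (t + 1) := by ring

lemma gfib_le' {k : ℕ} (hk : 2 ≤ k) (t : ℕ) (ht : k - 1 ≤ t) :
    gfib k t ≤ 2 ^ (t + 1 - k) := by
  rcases eq_or_lt_of_le ht with h | h
  · rw [← h, gfib_km1]; exact Nat.one_le_two_pow
  · have : t = k + (t - k) := by omega
    rw [this]
    calc gfib k (k + (t - k)) ≤ 2 ^ (t - k) := gfib_le hk _
      _ ≤ 2 ^ (k + (t - k) + 1 - k) := Nat.pow_le_pow_right (by norm_num) (by omega)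

lemma gfib_ge {k : ℕ} (hk : 2 ≤ k) :
    ∀ t, 2 ^ (k + t + 1) ≤ 2 ^ (k + 1) * gfib k (k + t) + (t + 1 - k) * 2 ^ (t + 1) := by
  intro t
  induction t with
  | zero => simp [gfib_k hk]
  | succ t ih =>
    have h := gfib_two_rec hk (i := k + t + 1) (by omega)
    have e : k + t + 1 - 1 = k + t := by omega
    rw [e] at h
    have e2 : k + t + 1 - k - 1 = t := by omega
    rw [e2] at h
    have key : 2 ^ (k + 1) * gfib k t + (t + 1 - k) * 2 ^ (t + 2) ≤ (t + 2 - k) * 2 ^ (t + 2) := by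
      rcases lt_or_ge t (k - 1) with hc | hc
      · have : gfib k t = 0 := gfib_zero hc
        rw [this]
        have : t + 1 - k = 0 := by omega
        simp [this]
      · have h1 : gfib k t ≤ 2 ^ (t + 1 - k) := gfib_le' hk t hc
        have h2 : 2 ^ (k + 1) * gfib k t ≤ 2 ^ (t + 2) := by
          calc 2 ^ (k + 1) * gfib k t ≤ 2 ^ (k + 1) * 2 ^ (t + 1 - k) :=
                Nat.mul_le_mul_left _ h1
            _ = 2 ^ (k + 1 + (t + 1 - k)) := by rw [← pow_add]
            _ = 2 ^ (t + 2) := by congr 1; omega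
        have h3 : (t + 1 - k) * 2 ^ (t + 2) + 2 ^ (t + 2) = (t + 2 - k) * 2 ^ (t + 2) := by
          have : t + 2 - k = (t + 1 - k) + 1 := by omega
          rw [this]; ring
        omega
    have step : 2 ^ (k + (t + 1) + 1) ≤ 2 ^ (k + 1) * (2 * gfib k (k + t)) + (t + 1 - k) * 2 ^ (t + 2) := by
      calc 2 ^ (k + (t + 1) + 1) = 2 * 2 ^ (k + t + 1) := by ring
        _ ≤ 2 * (2 ^ (k + 1) * gfib k (k + t) + (t + 1 - k) * 2 ^ (t + 1)) :=
            Nat.mul_le_mul_left _ ih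
        _ = 2 ^ (k + 1) * (2 * gfib k (k + t)) + (t + 1 - k) * 2 ^ (t + 2) := by ring
    have e3 : k + (t + 1) = k + t + 1 := by omega
    rw [e3]
    calc 2 ^ (k + t + 1 + 1) ≤ 2 ^ (k + 1) * (2 * gfib k (k + t)) + (t + 1 - k) * 2 ^ (t + 2) := by
          rw [← e3]; exact step
      _ = 2 ^ (k + 1) * (gfib k (k + t + 1) + gfib k t) + (t + 1 - k) * 2 ^ (t + 2) := by rw [h]
      _ = 2 ^ (k + 1) * gfib k (k + t + 1) + (2 ^ (k + 1) * gfib k t + (t + 1 - k) * 2 ^ (t + 2)) := by ring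
      _ ≤ 2 ^ (k + 1) * gfib k (k + t + 1) + (t + 2 - k) * 2 ^ (t + 2) := by omega

lemma genFib_le {k n : ℕ} (hk : 2 ≤ k) (hn : 2 ≤ n) : genFib k n ≤ 2 ^ (n - 2) := by
  unfold genFib
  have e : n + k - 2 = k + (n - 2) := by omega
  rw [e]
  exact gfib_le hk (n - 2)

lemma genFib_ge {k n : ℕ} (hk : 2 ≤ k) (hn : 2 ≤ n) :
    2 ^ (k + (n - 2) + 1) ≤ 2 ^ (k + 1) * genFib k n + (n - 1 - k) * 2 ^ (n - 1) := by
  unfold genFib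
  have e : n + k - 2 = k + (n - 2) := by omega
  rw [e]
  have h := gfib_ge hk (n - 2)
  have e1 : n - 2 + 1 - k = n - 1 - k := by omega
  have e2 : n - 2 + 1 = n - 1 := by omega
  rw [e1, e2] at h
  exact h

lemma real_endgame (A B F cm cn εk εl : ℝ)
    (hA0 : 0 < A) (hB0 : 0 < B)
    (hεk2 : 2 ≤ εk) (hεkl : εk ≤ εl)
    (hcm0 : 0 ≤ cm) (hcn0 : 0 ≤ cn) (hcm : cm < εk) (hcn : cn < εl)
    (hFA : F ≤ A) (hFB : F ≤ B)
    (hAF : (A - F) * (εk * εk) ≤ cm * A) (hBF : (B - F) * (εl * εl) ≤ cn * B) :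
    |B / A - 1| < 11 / εk := by
  have hεk0 : (0 : ℝ) < εk := by linarith
  have hεl0 : (0 : ℝ) < εl := by linarith
  have hεl2 : (2 : ℝ) ≤ εl := le_trans hεk2 hεkl
  have h1 : B - F < B / εl := by
    rw [lt_div_iff₀ hεl0]
    nlinarith [hBF, mul_lt_mul_of_pos_right hcn hB0, hεl0]
  have hBle : B ≤ 2 * A := by
    have h2 : B / εl ≤ B / 2 := div_le_div_of_nonneg_left hB0.le (by norm_num) hεl2
    linarith
  have hup : (B - A) * εk < 2 * A := by
    have h2 : B / εl ≤ B / εk := div_le_div_of_nonneg_left hB0.le hεk0 hεkl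
    have h3 : B - A < B / εk := by linarith
    have h4 : (B - A) * εk < B := (lt_div_iff₀ hεk0).mp h3
    linarith
  have hlow : (A - B) * εk < A := by
    have h5 : (A - F) * εk < A := by
      nlinarith [hAF, mul_lt_mul_of_pos_right hcm hA0, hεk0]
    have h6 : (A - B) * εk ≤ (A - F) * εk := by
      apply mul_le_mul_of_nonneg_right _ hεk0.le
      linarith
    linarith
  rw [abs_lt]
  have hBA1 : B / A - 1 = (B - A) / A := by field_simp
  have hAB1 : 1 - B / A = (A - B) / A := by field_simp
  constructor
  · have hh : (A - B) / A < 1 / εk := by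
      rw [div_lt_div_iff₀ hA0 hεk0]
      linarith
    have h19 : (1 : ℝ) / εk < 11 / εk := by
      rw [div_lt_div_iff₀ hεk0 hεk0]
      nlinarith
    linarith [hAB1 ▸ hh]
  · have hh : (B - A) / A < 2 / εk := by
      rw [div_lt_div_iff₀ hA0 hεk0]
      linarith
    have h29 : (2 : ℝ) / εk < 11 / εk := by
      rw [div_lt_div_iff₀ hεk0 hεk0]
      nlinarith
    linarith [hBA1 ▸ hh]

theorem powers_of_two_close (k l m n : ℕ) (hk : 2 ≤ k) (hkl : k < l)
    (hn : l + 1 < n) (hm : k + 1 < m) (heq : genFib k m = genFib l n)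
    (hnsmall : (n : ℝ) < (2 : ℝ) ^ ((l : ℝ) / 2))
    (hmsmall : (m : ℝ) < (2 : ℝ) ^ ((k : ℝ) / 2)) :
    |(2 : ℝ) ^ ((n : ℤ) - (m : ℤ)) - 1| < 11 / (2 : ℝ) ^ ((k : ℝ) / 2) := by
  have hl : 2 ≤ l := by omega
  have hm2 : 2 ≤ m := by omega
  have hn2 : 2 ≤ n := by omega
  have hεk2 : (2 : ℝ) ≤ (2 : ℝ) ^ ((k : ℝ) / 2) := by
    calc (2 : ℝ) = 2 ^ (1 : ℝ) := (Real.rpow_one 2).symm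
      _ ≤ 2 ^ ((k : ℝ) / 2) := by
          apply Real.rpow_le_rpow_of_exponent_le (by norm_num)
          have : (2 : ℝ) ≤ (k : ℝ) := by exact_mod_cast hk
          linarith
  have hεkl : (2 : ℝ) ^ ((k : ℝ) / 2) ≤ (2 : ℝ) ^ ((l : ℝ) / 2) := by
    apply Real.rpow_le_rpow_of_exponent_le (by norm_num)
    have : (k : ℝ) ≤ (l : ℝ) := by exact_mod_cast hkl.le
    linarith
  have hek : (2 : ℝ) ^ (k : ℕ) = 2 ^ ((k : ℝ) / 2) * 2 ^ ((k : ℝ) / 2) := by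
    rw [← Real.rpow_add (by norm_num : (0:ℝ) < 2), ← Real.rpow_natCast 2 k]
    congr 1
    ring
  have hel : (2 : ℝ) ^ (l : ℕ) = 2 ^ ((l : ℝ) / 2) * 2 ^ ((l : ℝ) / 2) := by
    rw [← Real.rpow_add (by norm_num : (0:ℝ) < 2), ← Real.rpow_natCast 2 l]
    congr 1
    ring
  have hcm : ((m - 1 - k : ℕ) : ℝ) < 2 ^ ((k : ℝ) / 2) := by
    calc ((m - 1 - k : ℕ) : ℝ) ≤ (m : ℝ) := Nat.cast_le.mpr (by omega)
      _ < _ := hmsmall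
  have hcn : ((n - 1 - l : ℕ) : ℝ) < 2 ^ ((l : ℝ) / 2) := by
    calc ((n - 1 - l : ℕ) : ℝ) ≤ (n : ℝ) := Nat.cast_le.mpr (by omega)
      _ < _ := hnsmall
  have hFA : ((genFib k m : ℕ) : ℝ) ≤ 2 ^ (m - 2) := by
    exact_mod_cast genFib_le hk hm2
  have hFB : ((genFib k m : ℕ) : ℝ) ≤ 2 ^ (n - 2) := by
    have h := genFib_le hl hn2
    rw [← heq] at h
    exact_mod_cast h
  have hAF : ((2 : ℝ) ^ (m - 2) - (genFib k m : ℝ)) * (2 ^ ((k : ℝ) / 2) * 2 ^ ((k : ℝ) / 2))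
      ≤ ((m - 1 - k : ℕ) : ℝ) * 2 ^ (m - 2) := by
    have h := genFib_ge hk hm2 (k := k) (n := m)
    have hr : ((2:ℝ)) ^ (k + (m - 2) + 1)
        ≤ 2 ^ (k + 1) * (genFib k m : ℝ) + ((m - 1 - k : ℕ) : ℝ) * 2 ^ (m - 1) := by
      exact_mod_cast h
    have e1 : (2:ℝ) ^ (k + (m - 2) + 1) = 2 ^ (k + 1) * 2 ^ (m - 2) := by
      rw [← pow_add]; congr 1; omega
    have e2 : (2:ℝ) ^ (m - 1) = 2 ^ (m - 2) * 2 := by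
      rw [← pow_succ]; congr 1; omega
    have e3 : (2:ℝ) ^ (k + 1) = 2 ^ ((k : ℝ) / 2) * 2 ^ ((k : ℝ) / 2) * 2 := by
      rw [pow_succ, hek]
    rw [e1, e2, e3] at hr
    nlinarith [hr]
  have hBF : ((2 : ℝ) ^ (n - 2) - (genFib k m : ℝ)) * (2 ^ ((l : ℝ) / 2) * 2 ^ ((l : ℝ) / 2))
      ≤ ((n - 1 - l : ℕ) : ℝ) * 2 ^ (n - 2) := by
    have h := genFib_ge hl hn2 (k := l) (n := n)
    rw [← heq] at h
    have hr : ((2:ℝ)) ^ (l + (n - 2) + 1)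
        ≤ 2 ^ (l + 1) * (genFib k m : ℝ) + ((n - 1 - l : ℕ) : ℝ) * 2 ^ (n - 1) := by
      exact_mod_cast h
    have e1 : (2:ℝ) ^ (l + (n - 2) + 1) = 2 ^ (l + 1) * 2 ^ (n - 2) := by
      rw [← pow_add]; congr 1; omega
    have e2 : (2:ℝ) ^ (n - 1) = 2 ^ (n - 2) * 2 := by
      rw [← pow_succ]; congr 1; omega
    have e3 : (2:ℝ) ^ (l + 1) = 2 ^ ((l : ℝ) / 2) * 2 ^ ((l : ℝ) / 2) * 2 := by
      rw [pow_succ, hel]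
    rw [e1, e2, e3] at hr
    nlinarith [hr]
  have hpow : (2 : ℝ) ^ ((n : ℤ) - (m : ℤ)) = 2 ^ (n - 2) / 2 ^ (m - 2) := by
    have e : (n : ℤ) - (m : ℤ) = ((n - 2 : ℕ) : ℤ) - ((m - 2 : ℕ) : ℤ) := by omega
    rw [e, zpow_sub₀ (by norm_num : (2:ℝ) ≠ 0), zpow_natCast, zpow_natCast]
  rw [hpow]
  exact real_endgame (2 ^ (m - 2)) (2 ^ (n - 2)) (genFib k m : ℝ)
    ((m - 1 - k : ℕ) : ℝ) ((n - 1 - l : ℕ) : ℝ) (2 ^ ((k : ℝ) / 2)) (2 ^ ((l : ℝ) / 2))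
    (by positivity) (by positivity) hεk2 hεkl (Nat.cast_nonneg _) (Nat.cast_nonneg _)
    hcm hcn hFA hFB hAF hBF
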